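/- Let t > 1 and n ≥ 2. The (2n-1)×(2n-1) real symmetric matrix R^t whose entries are: diagonal entries 1 for i ≤ 2n-2 and 2t at position (2n-1, 2n-1); entries 1 - 1/t at positions (2i-1, 2i) and (2i, 2i-1) for 1 ≤ i ≤ n-1; entries 1 in the last row and column (off the corner); and 1/2 at all remaining off-diagonal positions — is invertible. -/

import Mathlib

/-- The `(2n-1)×(2n-1)` matrix `R^t` (0-indexed): diagonal entries `1`, except
the last one which is `2t`; entries `1 - 1/t` at the pair positions
`(2i-2, 2i-1)` and `(2i-1, 2i-2)` (0-indexed, i.e. `(2i-1, 2i)` 1-indexed);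
entries `1` on the last row and column off the corner; and `1/2` at all
remaining off-diagonal positions. -/
noncomputable def Rt (n : ℕ) (t : ℝ) : Matrix (Fin (2*n-1)) (Fin (2*n-1)) ℝ :=
  Matrix.of fun j k =>
    if j = k then (if (j : ℕ) = 2*n-2 then 2*t else 1)
    else if (j : ℕ) = 2*n-2 ∨ (k : ℕ) = 2*n-2 then 1
    else if (j : ℕ) / 2 = (k : ℕ) / 2 then 1 - 1/t
    else 1/2

open Finset Matrix

noncomputable def Ent (n : ℕ) (t : ℝ) (j k : ℕ) : ℝ :=
  if j = k then (if j = 2*n-2 then 2*t else 1)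
  else if j = 2*n-2 ∨ k = 2*n-2 then 1
  else if j/2 = k/2 then 1-1/t else 1/2

lemma Rt_apply (n : ℕ) (t : ℝ) (j k : Fin (2*n-1)) :
    Rt n t j k = Ent n t (j : ℕ) (k : ℕ) := by
  by_cases h : j = k
  · subst h; simp [Rt, Ent]
  · have h' : (j : ℕ) ≠ (k : ℕ) := fun hh => h (Fin.ext hh)
    simp [Rt, Ent, h, h']

lemma Ent_symm (n : ℕ) (t : ℝ) (j k : ℕ) : Ent n t j k = Ent n t k j := by
  unfold Ent
  rcases eq_or_ne j k with h | h
  · subst h; rfl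
  · rw [if_neg h, if_neg (Ne.symm h)]
    by_cases h1 : j = 2*n-2 ∨ k = 2*n-2
    · rw [if_pos h1, if_pos (Or.symm h1)]
    · rw [if_neg h1, if_neg (fun hc => h1 (Or.symm hc))]
      by_cases h2 : j/2 = k/2
      · rw [if_pos h2, if_pos h2.symm]
      · rw [if_neg h2, if_neg (fun hc => h2 hc.symm)]

lemma sum_pair (m : ℕ) (g : ℕ → ℝ) :
    ∑ j ∈ range (2*m), g j = ∑ p ∈ range m, (g (2*p) + g (2*p+1)) := by
  induction m with
  | zero => simp
  | succ m ih =>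
      rw [show 2*(m+1) = (2*m+1)+1 by ring, sum_range_succ, sum_range_succ,
        sum_range_succ, ih]
      ring


set_option maxHeartbeats 1000000

/-- for `t > 1` and `n ≥ 2`, the matrix `R^t` is invertible. -/
theorem stmt_9 (n : ℕ) (hn : 2 ≤ n) (t : ℝ) (ht : 1 < t) :
    IsUnit (Rt n t) := by
  have ht0 : (0:ℝ) < t := lt_trans one_pos ht
  have htne : t ≠ 0 := ne_of_gt ht0
  set m := n - 1 with hm
  have hm1 : 1 ≤ m := by omega
  have hpd : (Rt n t).PosDef := by
    refine Matrix.PosDef.of_dotProduct_mulVec_pos ?_ ?_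
    · -- Hermitian
      ext j k
      simp only [Matrix.conjTranspose_apply, star_trivial]
      rw [Rt_apply, Rt_apply, Ent_symm]
    · intro x hx
      have hstar : star x = x := rfl
      rw [hstar]
      set x' := (fun j => if h : j < 2*n-1 then x ⟨j, h⟩ else 0 : ℕ → ℝ) with hx'
      have hxval : ∀ (j : ℕ) (h : j < 2*n-1), x ⟨j, h⟩ = x' j := by
        intro j h; simp [hx', dif_pos h]
      set y : ℝ := x' (2*m) with hy
      set s : ℝ := ∑ k ∈ range (2*m), x' k with hs
      -- Step A: rewrite quadratic form as a ℕ-indexed double sum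
      have hq1 : x ⬝ᵥ ((Rt n t) *ᵥ x)
          = ∑ j ∈ range (2*n-1), ∑ k ∈ range (2*n-1),
              Ent n t j k * x' j * x' k := by
        have h1 : ∀ j : Fin (2*n-1), (Rt n t *ᵥ x) j
            = ∑ k ∈ range (2*n-1), Ent n t (j:ℕ) k * x' k := by
          intro j
          rw [Matrix.mulVec, dotProduct,
            ← Fin.sum_univ_eq_sum_range (fun k => Ent n t (j:ℕ) k * x' k)]
          exact Finset.sum_congr rfl fun k _ => by
            rw [Rt_apply]
            have := hxval (k : ℕ) k.isLt
            simp only [Fin.eta] at this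
            rw [this]
        rw [dotProduct,
          ← Fin.sum_univ_eq_sum_range
            (fun j => ∑ k ∈ range (2*n-1), Ent n t j k * x' j * x' k)]
        refine Finset.sum_congr rfl fun j _ => ?_
        rw [h1 j, Finset.mul_sum]
        refine Finset.sum_congr rfl fun k _ => ?_
        have hxj := hxval (j : ℕ) j.isLt
        simp only [Fin.eta] at hxj
        rw [← hxj]
        ring
      -- Step B: the key algebraic identity
      have key : ∑ j ∈ range (2*n-1), ∑ k ∈ range (2*n-1),
              Ent n t j k * x' j * x' k
          = (1/2)*(s+2*y)^2 + 2*(t-1)*y^2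
            + ∑ p ∈ range m, ((1/2 - 1/(2*t))*(x' (2*p) + x' (2*p+1))^2
                + (1/(2*t))*(x' (2*p) - x' (2*p+1))^2) := by
        have hM : 2*n-1 = 2*m+1 := by omega
        rw [hM, sum_range_succ]
        -- last row
        have hlast : ∑ k ∈ range (2*m+1), Ent n t (2*m) k * x' (2*m) * x' k
            = s*y + 2*t*y^2 := by
          rw [sum_range_succ]
          have hEll : Ent n t (2*m) (2*m) = 2*t := by
            unfold Ent; rw [if_pos rfl, if_pos (by omega)]
          have hc : ∀ k ∈ range (2*m),
              Ent n t (2*m) k * x' (2*m) * x' k = x' k * y := by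
            intro k hk; rw [mem_range] at hk
            have hE : Ent n t (2*m) k = 1 := by
              unfold Ent; rw [if_neg (by omega), if_pos (Or.inl (by omega))]
            rw [hE, hy]; ring
          rw [Finset.sum_congr rfl hc, ← Finset.sum_mul, ← hs, hEll, hy]
          ring
        rw [hlast]
        -- rows j < 2m : peel off the last column
        have hrow : ∀ j ∈ range (2*m),
            (∑ k ∈ range (2*m+1), Ent n t j k * x' j * x' k)
            = (∑ k ∈ range (2*m), Ent n t j k * x' j * x' k) + x' j * y := by
          intro j hj; rw [mem_range] at hj
          rw [sum_range_succ]
          have hE : Ent n t j (2*m) = 1 := by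
            unfold Ent; rw [if_neg (by omega), if_pos (Or.inr (by omega))]
          rw [hE, hy]; ring
        rw [Finset.sum_congr rfl hrow, Finset.sum_add_distrib, ← Finset.sum_mul, ← hs]
        -- the double sum over the bulk
        set D : ℕ → ℕ → ℝ :=
          fun j k => if j/2 = k/2 then (if j = k then (1:ℝ)/2 else 1/2 - 1/t) else 0
          with hD
        have hsplit : ∀ j k, j < 2*m → k < 2*m → Ent n t j k = 1/2 + D j k := by
          intro j k hj hk
          unfold Ent; simp only [hD]
          rcases eq_or_ne j k with h | h
          · subst h
            rw [if_pos rfl, if_pos rfl, if_pos rfl, if_neg (by omega)]; ring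
          · rw [if_neg h, if_neg (by omega : ¬(j = 2*n-2 ∨ k = 2*n-2))]
            rcases eq_or_ne (j/2) (k/2) with h2 | h2
            · rw [if_pos h2, if_pos h2, if_neg h]; ring
            · rw [if_neg h2, if_neg h2]; ring
        have hsplitsum : ∀ j ∈ range (2*m),
            ∑ k ∈ range (2*m), Ent n t j k * x' j * x' k
            = (∑ k ∈ range (2*m), (1/2:ℝ)*(x' j * x' k))
              + ∑ k ∈ range (2*m), D j k * x' j * x' k := by
          intro j hj; rw [mem_range] at hj
          rw [← Finset.sum_add_distrib]
          refine Finset.sum_congr rfl fun k hk => ?_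
          rw [mem_range] at hk
          rw [hsplit j k hj hk]; ring
        rw [Finset.sum_congr rfl hsplitsum, Finset.sum_add_distrib]
        have h12 : ∑ j ∈ range (2*m), ∑ k ∈ range (2*m), (1/2:ℝ)*(x' j * x' k)
            = (1/2)*s^2 := by
          have e1 : ∑ j ∈ range (2*m), ∑ k ∈ range (2*m), (1/2:ℝ)*(x' j * x' k)
              = (1/2) * ∑ j ∈ range (2*m), ∑ k ∈ range (2*m), x' j * x' k := by
            rw [Finset.mul_sum]
            exact Finset.sum_congr rfl fun j _ => by rw [Finset.mul_sum]
          rw [e1, ← Finset.sum_mul_sum, ← hs]; ring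
        rw [h12]
        -- pair decomposition of the D-sum
        have hDzero : ∀ j k, j/2 ≠ k/2 → D j k = 0 := by
          intro j k h; simp only [hD]; rw [if_neg h]
        have hDD : ∑ j ∈ range (2*m), ∑ k ∈ range (2*m), D j k * x' j * x' k
            = ∑ p ∈ range m, ((1/2)*(x' (2*p)^2 + x' (2*p+1)^2)
                + (1-2/t)*(x' (2*p) * x' (2*p+1))) := by
          rw [sum_pair m (fun j => ∑ k ∈ range (2*m), D j k * x' j * x' k)]
          refine Finset.sum_congr rfl fun p hp => ?_
          rw [mem_range] at hp
          rw [sum_pair m (fun k => D (2*p) k * x' (2*p) * x' k),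
              sum_pair m (fun k => D (2*p+1) k * x' (2*p+1) * x' k),
              ← Finset.sum_add_distrib]
          rw [Finset.sum_eq_single_of_mem p (mem_range.mpr hp)
            (fun q hq hqp => by
              rw [hDzero (2*p) (2*q) (by omega), hDzero (2*p) (2*q+1) (by omega),
                hDzero (2*p+1) (2*q) (by omega), hDzero (2*p+1) (2*q+1) (by omega)]
              ring)]
          have d1 : D (2*p) (2*p) = 1/2 := by simp [hD]
          have d2 : D (2*p) (2*p+1) = 1/2 - 1/t := by
            have h1 : (2*p)/2 = (2*p+1)/2 := by omega
            have h2 : ¬(2*p = 2*p+1) := by omega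
            simp [hD, h1, h2]
          have d3 : D (2*p+1) (2*p) = 1/2 - 1/t := by
            have h1 : (2*p+1)/2 = (2*p)/2 := by omega
            have h2 : ¬(2*p+1 = 2*p) := by omega
            simp [hD, h1, h2]
          have d4 : D (2*p+1) (2*p+1) = 1/2 := by simp [hD]
          rw [d1, d2, d3, d4]; ring
        rw [hDD]
        -- final algebra
        have hterm : ∀ p ∈ range m,
            (1/2)*(x' (2*p)^2 + x' (2*p+1)^2) + (1-2/t)*(x' (2*p) * x' (2*p+1))
            = (1/2 - 1/(2*t))*(x' (2*p) + x' (2*p+1))^2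
              + (1/(2*t))*(x' (2*p) - x' (2*p+1))^2 := by
          intro p _
          field_simp
          ring
        rw [Finset.sum_congr rfl hterm]
        ring
      rw [hq1, key]
      -- positivity
      have hc1 : (0:ℝ) < 1/2 - 1/(2*t) := by
        have h2t : (2:ℝ) < 2*t := by linarith
        have := one_div_lt_one_div_of_lt (by norm_num : (0:ℝ) < 2) h2t
        linarith
      have hc2 : (0:ℝ) < 1/(2*t) := by positivity
      have hTnn : ∀ p ∈ range m,
          (0:ℝ) ≤ (1/2 - 1/(2*t))*(x' (2*p) + x' (2*p+1))^2
              + (1/(2*t))*(x' (2*p) - x' (2*p+1))^2 := fun p _ =>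
        add_nonneg (mul_nonneg hc1.le (sq_nonneg _)) (mul_nonneg hc2.le (sq_nonneg _))
      have hCnn : (0:ℝ) ≤ ∑ p ∈ range m, ((1/2 - 1/(2*t))*(x' (2*p) + x' (2*p+1))^2
              + (1/(2*t))*(x' (2*p) - x' (2*p+1))^2) := Finset.sum_nonneg hTnn
      have hAnn : (0:ℝ) ≤ (1/2)*(s+2*y)^2 := by positivity
      have hBnn : (0:ℝ) ≤ 2*(t-1)*y^2 := by nlinarith [sq_nonneg y]
      obtain ⟨j0, hj0⟩ := Function.ne_iff.mp hx
      have hj0v : x' (j0 : ℕ) ≠ 0 := by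
        have := hxval (j0 : ℕ) j0.isLt
        simp only [Fin.eta] at this
        rw [← this]; exact hj0
      by_cases hcase : (j0 : ℕ) = 2*m
      · -- the last coordinate is nonzero
        have hyne : y ≠ 0 := by rw [hy, ← hcase]; exact hj0v
        have hy2 : 0 < y^2 := by
          have := mul_self_pos.mpr hyne; nlinarith
        have hB : (0:ℝ) < 2*(t-1)*y^2 := by nlinarith
        linarith
      · -- some bulk coordinate is nonzero
        have hj0lt : (j0 : ℕ) < 2*m := by
          have := j0.isLt; omega
        set p := (j0 : ℕ)/2 with hp
        have hpm : p < m := by omega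
        have hab : x' (2*p) ≠ 0 ∨ x' (2*p+1) ≠ 0 := by
          rcases (by omega : (j0:ℕ) = 2*p ∨ (j0:ℕ) = 2*p+1) with h | h
          · left; rw [← h]; exact hj0v
          · right; rw [← h]; exact hj0v
        have hsum : x' (2*p) + x' (2*p+1) ≠ 0 ∨ x' (2*p) - x' (2*p+1) ≠ 0 := by
          by_contra hcon
          push_neg at hcon
          obtain ⟨h1, h2⟩ := hcon
          rcases hab with h | h
          · exact h (by linarith)
          · exact h (by linarith)
        have hTp : (0:ℝ) < (1/2 - 1/(2*t))*(x' (2*p) + x' (2*p+1))^2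
              + (1/(2*t))*(x' (2*p) - x' (2*p+1))^2 := by
          rcases hsum with h | h
          · have : 0 < (x' (2*p) + x' (2*p+1))^2 := by
              have := mul_self_pos.mpr h; nlinarith
            have := mul_pos hc1 this
            nlinarith [mul_nonneg hc2.le (sq_nonneg (x' (2*p) - x' (2*p+1)))]
          · have : 0 < (x' (2*p) - x' (2*p+1))^2 := by
              have := mul_self_pos.mpr h; nlinarith
            have := mul_pos hc2 this
            nlinarith [mul_nonneg hc1.le (sq_nonneg (x' (2*p) + x' (2*p+1)))]
        have hC : (0:ℝ) < ∑ p ∈ range m, ((1/2 - 1/(2*t))*(x' (2*p) + x' (2*p+1))^2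
              + (1/(2*t))*(x' (2*p) - x' (2*p+1))^2) :=
          Finset.sum_pos' hTnn ⟨p, mem_range.mpr hpm, hTp⟩
        linarith
  exact hpd.isUnit
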